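/- Under the no-incoming-edge condition, reachability from an untreated positive node is unaffected by removing treated positives: for any realization H ⊆ E, any S ⊆ P, any x ∈ P \ S, and any u ∈ N, the node u is reachable from x in H[V \ S] if and only if u is reachable from x in H (i.e., in H with no vertices removed). -/

import Mathlib

open Finset

/-- A single transmission step along a live edge of `H`, avoiding the removed vertex set `S`. -/
def MintStep {α : Type*} (H : Finset (α × α)) (S : Finset α) (x y : α) : Prop :=
  (x, y) ∈ H ∧ x ∉ S ∧ y ∉ S

/-- `u` is reachable from `v` in `H[V \ S]`: there is a directed path (possibly of length 0)
from `v` to `u` using only edges of `H`, all of whose vertices avoid `S`. -/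
def MintReach {α : Type*} (H : Finset (α × α)) (S : Finset α) (v u : α) : Prop :=
  v ∉ S ∧ Relation.ReflTransGen (MintStep H S) v u


/-- Under the no-incoming-edge condition, reachability from an untreated positive node is
unaffected by removing treated positives: for `H ⊆ E`, `S ⊆ P`, `x ∈ P \ S`, and `u ∈ N`,
`u` is reachable from `x` in `H[V \ S]` iff `u` is reachable from `x` in `H`
(with no vertices removed). -/
theorem stmt3 {α : Type*} [DecidableEq α] (E H : Finset (α × α)) (hHE : H ⊆ E)
    (w : α × α → ℝ) (hw : ∀ e ∈ E, 0 ≤ w e ∧ w e ≤ 1)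
    (P : Finset α) (hinc : ∀ e ∈ E, e.2 ∉ P)
    (S : Finset α) (hS : S ⊆ P) (x : α) (hxP : x ∈ P) (hxS : x ∉ S)
    (u : α) (hu : u ∉ P) :
    MintReach H S x u ↔ MintReach H ∅ x u := by
  constructor
  · rintro ⟨-, h⟩
    refine ⟨Finset.notMem_empty x, ?_⟩
    exact Relation.ReflTransGen.mono (r := MintStep H S) (p := MintStep H ∅) (fun a b ⟨he, _, _⟩ => ⟨he, Finset.notMem_empty a, Finset.notMem_empty b⟩) _ _ h
  · rintro ⟨-, h⟩
    refine ⟨hxS, ?_⟩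
    clear hxP hu
    induction h using Relation.ReflTransGen.head_induction_on with
    | refl => exact Relation.ReflTransGen.refl
    | head hstep _ ih =>
      rename_i a b _
      obtain ⟨he, -, -⟩ := hstep
      have hbP : b ∉ P := hinc (a, b) (hHE he)
      have hbS : b ∉ S := fun hb => hbP (hS hb)
      exact Relation.ReflTransGen.head ⟨he, hxS, hbS⟩ (ih hbS)
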